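/- Let n ≥ 1, θ ∈ ℝ, θ_k = θ/n + 2πk/n and t_k = e^{iθ_k} for 1 ≤ k ≤ n. Let P(t) = Σ_{j=0}^{m} a_j t^j be a polynomial with complex coefficients a_j, and set β_k = n^{−2} P'(t_k) e^{2iθ_k − 2iθ} − (n − 1) n^{−2} P(t_k) e^{iθ_k − 2iθ}. Then Σ_{k=1}^{n} β_k = Σ_{l ≥ 1, ln − 1 ≤ m} (l − 1) a_{ln − 1} e^{i(l − 2)θ}. -/

import Mathlib

open Complex Finset

/-- The angle `θ_k = θ/n + 2πk/n`. -/
noncomputable def thetaK (n : ℕ) (θ : ℝ) (k : ℕ) : ℝ := θ/n + 2*Real.pi*k/n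

/-- The root `t_k = e^{iθ_k}` of `t^n = e^{iθ}`. -/
noncomputable def tK (n : ℕ) (θ : ℝ) (k : ℕ) : ℂ :=
  Complex.exp ((thetaK n θ k : ℝ) * Complex.I)

lemma tK_pow_sum (n : ℕ) (hn : 1 ≤ n) (θ : ℝ) (p : ℕ) :
    ∑ k ∈ Finset.Icc 1 n, (tK n θ k)^p
      = if n ∣ p then (n : ℂ) * Complex.exp (((p : ℝ) * θ / n : ℝ) * Complex.I) else 0 := by
  have hn0 : (n : ℝ) ≠ 0 := Nat.cast_ne_zero.2 (by omega)
  have hnc : (n : ℂ) ≠ 0 := Nat.cast_ne_zero.2 (by omega)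
  set ζ : ℂ := Complex.exp ((2*Real.pi*p/n : ℝ) * Complex.I) with hζ
  have hterm : ∀ k : ℕ, (tK n θ k)^p
      = Complex.exp (((p : ℝ) * θ / n : ℝ) * Complex.I) * ζ^k := by
    intro k
    rw [tK, ← Complex.exp_nat_mul, hζ, ← Complex.exp_nat_mul, ← Complex.exp_add]
    congr 1
    rw [thetaK]
    push_cast
    field_simp
  simp only [hterm, ← Finset.mul_sum]
  have hζn : ζ^n = 1 := by
    rw [hζ, ← Complex.exp_nat_mul]
    rw [show ((n:ℂ) * (((2*Real.pi*p/n : ℝ) : ℂ) * Complex.I)) = (p : ℂ) * (2*Real.pi*Complex.I) by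
      push_cast; field_simp]
    exact_mod_cast Complex.exp_int_mul_two_pi_mul_I p
  by_cases hdvd : n ∣ p
  · obtain ⟨c, rfl⟩ := hdvd
    have hζ1 : ζ = 1 := by
      rw [hζ, show (((2*Real.pi*((n*c : ℕ):ℝ)/n : ℝ)) : ℂ) * Complex.I
          = (c : ℂ) * (2*Real.pi*Complex.I) by push_cast; field_simp]
      exact_mod_cast Complex.exp_int_mul_two_pi_mul_I c
    simp [hζ1, Nat.card_Icc, mul_comm]
  · have hζne : ζ ≠ 1 := by
      intro h
      rw [hζ, Complex.exp_eq_one_iff] at h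
      obtain ⟨z, hz⟩ := h
      have him : (2*Real.pi*p/n : ℝ) = z * (2*Real.pi) := by
        have := congrArg Complex.im hz
        simpa using this
      have hpi : (2*Real.pi) ≠ 0 := by positivity
      have hp : (p : ℝ) = z * n := by
        field_simp at him
        nlinarith [Real.pi_pos]
      have hpz : (p : ℤ) = (n : ℤ) * z := by exact_mod_cast (by linarith : (p:ℝ) = (n:ℝ)*z)
      exact hdvd (Int.natCast_dvd_natCast.mp ⟨z, hpz⟩)
    have hsum : ∑ k ∈ Finset.Icc 1 n, ζ^k = 0 := by
      have h1 : ∑ k ∈ Finset.Icc 1 n, ζ^k = ζ * ∑ k ∈ Finset.range n, ζ^k := by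
        rw [← Finset.Ico_add_one_right_eq_Icc, Finset.sum_Ico_eq_sum_range, Finset.mul_sum]
        exact Finset.sum_congr (by norm_num) fun i _ => by rw [pow_add, pow_one]
      rw [h1, geom_sum_eq hζne, hζn]
      simp
    rw [if_neg hdvd, hsum, mul_zero]

/-- `β_k = n⁻² P'(t_k) e^{2iθ_k − 2iθ} − (n−1) n⁻² P(t_k) e^{iθ_k − 2iθ}` for the polynomial
`P(t) = Σ_{j=0}^m a_j t^j`. -/
noncomputable def betaCoef (n : ℕ) (θ : ℝ) (m : ℕ) (a : ℕ → ℂ) (k : ℕ) : ℂ :=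
  (∑ j ∈ Finset.range (m+1), (j : ℂ) * a j * (tK n θ k)^(j-1)) / (n : ℂ)^2 *
      Complex.exp ((2 * thetaK n θ k - 2 * θ : ℝ) * Complex.I)
    - ((n : ℂ) - 1) / (n : ℂ)^2 *
      (∑ j ∈ Finset.range (m+1), a j * (tK n θ k)^j) *
      Complex.exp ((thetaK n θ k - 2 * θ : ℝ) * Complex.I)

lemma beta_rw (n : ℕ) (θ : ℝ) (m : ℕ) (a : ℕ → ℂ) (k : ℕ) :
    betaCoef n θ m a k
      = ∑ j ∈ Finset.range (m+1),
          ((j : ℂ) - n + 1) * a j * (tK n θ k)^(j+1)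
            * Complex.exp (((-2) * θ : ℝ) * Complex.I) / (n : ℂ)^2 := by
  have h2 : Complex.exp ((2 * thetaK n θ k - 2 * θ : ℝ) * Complex.I)
      = tK n θ k ^ 2 * Complex.exp (((-2) * θ : ℝ) * Complex.I) := by
    rw [tK, sq, ← Complex.exp_add, ← Complex.exp_add]
    congr 1
    push_cast
    ring
  have h1 : Complex.exp ((thetaK n θ k - 2 * θ : ℝ) * Complex.I)
      = tK n θ k * Complex.exp (((-2) * θ : ℝ) * Complex.I) := by
    rw [tK, ← Complex.exp_add]
    congr 1
    push_cast
    ring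
  rw [betaCoef, h2, h1, div_mul_eq_mul_div, Finset.sum_mul, Finset.sum_div,
    mul_comm (((n:ℂ)-1)/(n:ℂ)^2), Finset.sum_mul, Finset.sum_mul, ← Finset.sum_sub_distrib]
  refine Finset.sum_congr rfl fun j _ => ?_
  rcases j with _ | i
  · simp
    ring
  · have hi : i + 1 - 1 = i := rfl
    rw [hi]
    push_cast
    ring

/-- `Σ_{k=1}^n β_k = Σ_{l ≥ 1, ln−1 ≤ m} (l−1) a_{ln−1} e^{i(l−2)θ}`. -/
theorem sum_betaK_eq
    (n : ℕ) (hn : 1 ≤ n) (θ : ℝ) (m : ℕ) (a : ℕ → ℂ) :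
    ∑ k ∈ Finset.Icc 1 n, betaCoef n θ m a k
      = ∑ l ∈ Finset.Icc 1 (m+1),
          if l * n - 1 ≤ m then
            ((l : ℂ) - 1) * a (l * n - 1) *
              Complex.exp ((((l : ℝ) - 2) * θ : ℝ) * Complex.I)
          else 0 := by
  have hn0 : (n : ℝ) ≠ 0 := Nat.cast_ne_zero.2 (by omega)
  have hnc : (n : ℂ) ≠ 0 := Nat.cast_ne_zero.2 (by omega)
  simp only [beta_rw]
  rw [Finset.sum_comm]
  have step : ∀ j ∈ Finset.range (m+1),
      (∑ k ∈ Finset.Icc 1 n,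
        ((j : ℂ) - n + 1) * a j * (tK n θ k)^(j+1)
          * Complex.exp (((-2) * θ : ℝ) * Complex.I) / (n : ℂ)^2)
      = if n ∣ (j+1) then
          ((j : ℂ) - n + 1) * a j
            * ((n : ℂ) * Complex.exp ((((j+1 : ℕ) : ℝ) * θ / n : ℝ) * Complex.I))
            * Complex.exp (((-2) * θ : ℝ) * Complex.I) / (n : ℂ)^2
        else 0 := by
    intro j _
    simp only [div_eq_mul_inv]
    rw [← Finset.sum_mul, ← Finset.sum_mul, ← Finset.mul_sum, tK_pow_sum n hn θ (j+1)]
    split_ifs with h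
    · ring
    · simp
  rw [Finset.sum_congr rfl step, ← Finset.sum_filter, ← Finset.sum_filter]
  refine Finset.sum_bij' (fun j _ => (j+1)/n) (fun l _ => l*n - 1) ?_ ?_ ?_ ?_ ?_
  · intro j hj
    simp only [Finset.mem_filter, Finset.mem_range, Finset.mem_Icc] at hj ⊢
    obtain ⟨hjm, c, hc⟩ := hj
    have hc1 : 1 ≤ c := Nat.pos_of_ne_zero (by rintro rfl; simp at hc)
    have hdiv : (j+1)/n = c := by rw [hc]; exact Nat.mul_div_cancel_left _ (by omega)
    have hcle : c ≤ j + 1 := Nat.le_of_dvd (by omega) ⟨n, by rw [hc, mul_comm]⟩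
    have hidx : c * n - 1 = j := by rw [mul_comm, ← hc]; omega
    rw [hdiv]
    exact ⟨⟨hc1, by omega⟩, by omega⟩
  · intro l hl
    simp only [Finset.mem_filter, Finset.mem_range, Finset.mem_Icc] at hl ⊢
    obtain ⟨⟨hl1, _⟩, hlm⟩ := hl
    have hpos : 1 ≤ l * n := Nat.one_le_iff_ne_zero.2 (Nat.mul_ne_zero (by omega) (by omega))
    refine ⟨by omega, ⟨l, by rw [mul_comm n l]; omega⟩⟩
  · intro j hj
    simp only [Finset.mem_filter, Finset.mem_range] at hj
    obtain ⟨hjm, c, hc⟩ := hj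
    have hdiv : (j+1)/n = c := by rw [hc]; exact Nat.mul_div_cancel_left _ (by omega)
    show (j+1)/n * n - 1 = j
    rw [hdiv, mul_comm, ← hc]
    omega
  · intro l hl
    simp only [Finset.mem_filter, Finset.mem_Icc] at hl
    obtain ⟨⟨hl1, _⟩, _⟩ := hl
    have hpos : 1 ≤ l * n := Nat.one_le_iff_ne_zero.2 (Nat.mul_ne_zero (by omega) (by omega))
    have h2 : l * n - 1 + 1 = l * n := by omega
    show (l * n - 1 + 1)/n = l
    rw [h2, Nat.mul_div_cancel _ (by omega)]
  · intro j hj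
    simp only [Finset.mem_filter, Finset.mem_range] at hj
    obtain ⟨hjm, c, hc⟩ := hj
    have hdiv : (j+1)/n = c := by rw [hc]; exact Nat.mul_div_cancel_left _ (by omega)
    have hidx : c * n - 1 = j := by rw [mul_comm, ← hc]; omega
    show _ = ((((j+1)/n : ℕ) : ℂ) - 1) * a ((j+1)/n * n - 1)
      * Complex.exp ((((((j+1)/n : ℕ) : ℝ) - 2) * θ : ℝ) * Complex.I)
    rw [hdiv, hidx]
    have hcc : (j : ℂ) + 1 = (n : ℂ) * c := by exact_mod_cast hc
    have hE : Complex.exp ((((j+1 : ℕ) : ℝ) * θ / n : ℝ) * Complex.I)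
        * Complex.exp (((-2) * θ : ℝ) * Complex.I)
        = Complex.exp ((((c : ℝ) - 2) * θ : ℝ) * Complex.I) := by
      rw [← Complex.exp_add]
      congr 1
      rw [hc]
      push_cast
      field_simp
      ring
    rw [← hE]
    set E1 := Complex.exp ((((j+1 : ℕ) : ℝ) * θ / n : ℝ) * Complex.I) with hE1
    set E2 := Complex.exp (((-2) * θ : ℝ) * Complex.I) with hE2
    field_simp
    linear_combination (a j * E1 * E2) * hcc
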